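/- For every complex d × d matrix Ψ, the minimum over pairs of unitary d × d matrices (U, V) of the entrywise ℓ₁ norm of UΨV is attained and equals the trace norm of Ψ: min_{U,V unitary} Σ_{i,j} |(UΨV)_{i,j}| = ‖Ψ‖₁. (This expresses that the negativity of quantumness of a bipartite pure state equals its negativity, since the coefficient matrix transforms as Ψ ↦ UΨV under local changes of basis and ‖Ψ‖₁ = Σ_k √λ_k in terms of the Schmidt coefficients.) -/

import Mathlib

open Matrix BigOperators
open scoped ComplexOrder

noncomputable section

/-- Trace norm `‖X‖₁ = Tr √(X†X)` of a square complex matrix (the sum of the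
singular values of `X`). -/
def traceNorm {m : Type*} [Fintype m] [DecidableEq m] (X : Matrix m m ℂ) : ℝ :=
  (((Matrix.posSemidef_conjTranspose_mul_self X).1.eigenvectorUnitary : Matrix m m ℂ) *
    diagonal (((↑) : ℝ → ℂ) ∘ Real.sqrt ∘ (Matrix.posSemidef_conjTranspose_mul_self X).1.eigenvalues) *
    (star (Matrix.posSemidef_conjTranspose_mul_self X).1.eigenvectorUnitary : Matrix m m ℂ)).trace.re

theorem exists_svd {d : ℕ} (A : Matrix (Fin d) (Fin d) ℂ) :
    ∃ U ∈ Matrix.unitaryGroup (Fin d) ℂ, ∃ V ∈ Matrix.unitaryGroup (Fin d) ℂ,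
      ∃ g : Fin d → ℝ, (∀ k, 0 ≤ g k) ∧
        U * A * V = Matrix.diagonal (fun k => (g k : ℂ)) ∧
        ((((Matrix.posSemidef_conjTranspose_mul_self A).1.eigenvectorUnitary : Matrix (Fin d) (Fin d) ℂ) *
    diagonal (((↑) : ℝ → ℂ) ∘ Real.sqrt ∘ (Matrix.posSemidef_conjTranspose_mul_self A).1.eigenvalues) *
    (star (Matrix.posSemidef_conjTranspose_mul_self A).1.eigenvectorUnitary : Matrix (Fin d) (Fin d) ℂ)).trace).re = ∑ k, g k := by
  have hH : (Aᴴ * A).PosSemidef := Matrix.posSemidef_conjTranspose_mul_self A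
  set hHerm := hH.1 with hHermdef
  set lam := hHerm.eigenvalues with hlamdef
  have hlam : ∀ k, 0 ≤ lam k := hH.eigenvalues_nonneg
  set V : Matrix (Fin d) (Fin d) ℂ := (hHerm.eigenvectorUnitary : Matrix (Fin d) (Fin d) ℂ) with hVdef
  set v : Fin d → EuclideanSpace ℂ (Fin d) := fun k => hHerm.eigenvectorBasis k with hvdef
  set w : Fin d → (Fin d → ℂ) := fun k => A *ᵥ ⇑(v k) with hwdef
  have key : ∀ j k, star (w j) ⬝ᵥ (w k) = (lam k : ℂ) * (if j = k then 1 else 0) := by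
    intro j k
    have h1 : star (w j) ⬝ᵥ (w k) = star ⇑(v j) ⬝ᵥ ((Aᴴ * A) *ᵥ ⇑(v k)) := by
      rw [hwdef]
      simp only [star_mulVec, ← Matrix.dotProduct_mulVec, vecMul_vecMul, mulVec_mulVec]
    rw [h1, hHerm.mulVec_eigenvectorBasis]
    rw [dotProduct_smul]
    have h2 : star ⇑(v j) ⬝ᵥ ⇑(v k) = (if j = k then 1 else 0 : ℂ) := by
      have := orthonormal_iff_ite.mp hHerm.eigenvectorBasis.orthonormal j k
      rw [EuclideanSpace.inner_eq_star_dotProduct, dotProduct_comm] at this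
      exact this
    rw [h2]
    simp [Complex.real_smul, hlamdef]
  have h0 : ∀ k, lam k = 0 → w k = 0 := by
    intro k hk
    have := key k k
    rw [hk, if_pos rfl] at this
    simpa using dotProduct_star_self_eq_zero.mp (by simpa using this)
  set f : Fin d → EuclideanSpace ℂ (Fin d) :=
    fun k => ((Real.sqrt (lam k) : ℂ))⁻¹ • (WithLp.equiv 2 (Fin d → ℂ)).symm (w k) with hfdef
  have hinner : ∀ j k, (inner ℂ (f j) (f k) : ℂ) =
      ((Real.sqrt (lam j) : ℂ))⁻¹ * (((Real.sqrt (lam k) : ℂ))⁻¹ *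
        ((lam k : ℂ) * (if j = k then 1 else 0))) := by
    intro j k
    rw [hfdef]
    simp only [inner_smul_left, inner_smul_right, WithLp.equiv_symm_apply,
      EuclideanSpace.inner_toLp_toLp]
    rw [dotProduct_comm, key]
    rw [← Complex.ofReal_inv, ← Complex.ofReal_inv, Complex.conj_ofReal]
    push_cast
    ring
  have horth : Orthonormal ℂ (Set.restrict {k | lam k ≠ 0} f) := by
    classical
    rw [orthonormal_iff_ite]
    rintro ⟨j, hj⟩ ⟨k, hk⟩
    show inner ℂ (f j) (f k) = _
    simp only [hinner]
    by_cases hjk : j = k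
    · subst hjk
      simp only [if_pos rfl, Subtype.ext_iff, mul_one]
      have hpos : 0 < lam j := lt_of_le_of_ne (hlam j) (Ne.symm hj)
      have hs : Real.sqrt (lam j) ≠ 0 := by positivity
      field_simp
      rw [← Complex.ofReal_pow, Real.sq_sqrt (hlam j)]
    · have : ¬ ((⟨j, hj⟩ : {k | lam k ≠ 0}) = ⟨k, hk⟩) := by
        simp [Subtype.ext_iff, hjk]
      rw [if_neg hjk, if_neg this]
      ring
  obtain ⟨b, hb⟩ := horth.exists_orthonormalBasis_extension_of_card_eq
    (by simp [finrank_euclideanSpace_fin])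
  set U : Matrix (Fin d) (Fin d) ℂ := Matrix.of (fun i k => b k i) with hUdef
  have hU : U ∈ Matrix.unitaryGroup (Fin d) ℂ := by
    rw [Matrix.mem_unitaryGroup_iff']
    ext j k
    have := orthonormal_iff_ite.mp b.orthonormal j k
    rw [EuclideanSpace.inner_eq_star_dotProduct, dotProduct_comm] at this
    simpa [Matrix.mul_apply, Matrix.conjTranspose_apply, Matrix.one_apply,
      dotProduct, hUdef] using this
  have hsqrtne : ∀ k, lam k ≠ 0 → (Real.sqrt (lam k) : ℂ) ≠ 0 := by
    intro k hk
    have hpos : 0 < lam k := lt_of_le_of_ne (hlam k) (Ne.symm hk)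
    simp [Real.sqrt_eq_zero', not_le, hpos]
  have hAV : A * V = U * Matrix.diagonal (fun k => (Real.sqrt (lam k) : ℂ)) := by
    ext i k
    have hL : (A * V) i k = w k i := by
      simp [Matrix.mul_apply, hwdef, Matrix.mulVec, dotProduct, hVdef,
        Matrix.IsHermitian.eigenvectorUnitary_apply, hvdef]
    rw [hL, Matrix.mul_diagonal]
    by_cases hk : lam k = 0
    · simp [h0 k hk, hk, Real.sqrt_eq_zero' ]
    · have hbk : b k = f k := hb k hk
      have hUik : U i k = (Real.sqrt (lam k) : ℂ)⁻¹ * w k i := by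
        simp [hUdef, hbk, hfdef]
      rw [hUik]
      field_simp
      exact (mul_div_cancel_right₀ (w k i) (hsqrtne k hk)).symm
  have hUAV : star U * (A * V) = Matrix.diagonal (fun k => (Real.sqrt (lam k) : ℂ)) := by
    rw [hAV, ← mul_assoc, Matrix.mem_unitaryGroup_iff'.mp hU, one_mul]
  have hstarU : star U ∈ Matrix.unitaryGroup (Fin d) ℂ := by
    rw [Matrix.mem_unitaryGroup_iff, star_star]
    exact Matrix.mem_unitaryGroup_iff'.mp hU
  refine ⟨star U, hstarU, V, hHerm.eigenvectorUnitary.2, fun k => Real.sqrt (lam k),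
    fun k => Real.sqrt_nonneg _, by rw [mul_assoc]; exact hUAV, ?_⟩
  have hsqrt : (((Matrix.posSemidef_conjTranspose_mul_self A).1.eigenvectorUnitary : Matrix (Fin d) (Fin d) ℂ) *
    diagonal (((↑) : ℝ → ℂ) ∘ Real.sqrt ∘ (Matrix.posSemidef_conjTranspose_mul_self A).1.eigenvalues) *
    (star (Matrix.posSemidef_conjTranspose_mul_self A).1.eigenvectorUnitary : Matrix (Fin d) (Fin d) ℂ)) =
      V * Matrix.diagonal ((↑) ∘ Real.sqrt ∘ lam) * star V := rfl
  rw [hsqrt, Matrix.trace_mul_cycle, Matrix.mem_unitaryGroup_iff'.mp hHerm.eigenvectorUnitary.2,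
    one_mul, Matrix.trace_diagonal]
  push_cast
  rw [Complex.re_sum]
  simp


theorem star_mem_unitaryGroup {d : ℕ} {M : Matrix (Fin d) (Fin d) ℂ}
    (hM : M ∈ Matrix.unitaryGroup (Fin d) ℂ) : star M ∈ Matrix.unitaryGroup (Fin d) ℂ := by
  rw [Matrix.mem_unitaryGroup_iff, star_star]
  exact Matrix.mem_unitaryGroup_iff'.mp hM

theorem unitary_entry_abs_le {d : ℕ} {M : Matrix (Fin d) (Fin d) ℂ}
    (hM : M ∈ Matrix.unitaryGroup (Fin d) ℂ) (i j : Fin d) : ‖M i j‖ ≤ 1 := by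
  have h := Matrix.mem_unitaryGroup_iff.mp hM
  have h2 : (∑ k, Complex.normSq (M i k) : ℂ) = 1 := by
    have := congrArg (fun N => N i i) h
    simpa [Matrix.mul_apply, Matrix.one_apply, Matrix.conjTranspose_apply,
      mul_comm, Complex.normSq_eq_conj_mul_self, Complex.ofReal_sum] using this
  have h3 : ∑ k, Complex.normSq (M i k) = 1 := by exact_mod_cast h2
  have h4 : Complex.normSq (M i j) ≤ 1 := by
    rw [← h3]
    exact Finset.single_le_sum (fun k _ => Complex.normSq_nonneg _) (Finset.mem_univ j)
  rw [Complex.norm_def]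
  exact Real.sqrt_le_one.mpr h4

/-- The minimum over pairs of unitaries `(U, V)` of the entrywise `ℓ₁` norm of `U Ψ V`
is attained and equals the trace norm of `Ψ`. -/
theorem isLeast_entrywise_l1_unitary_orbit {d : ℕ} (Ψ : Matrix (Fin d) (Fin d) ℂ) :
    IsLeast
      {x : ℝ | ∃ U ∈ Matrix.unitaryGroup (Fin d) ℂ, ∃ V ∈ Matrix.unitaryGroup (Fin d) ℂ,
        x = ∑ i, ∑ j, ‖(U * Ψ * V) i j‖}
      (traceNorm Ψ) := by
  obtain ⟨U, hU, V, hV, g, hg, hUAV, htr⟩ := exists_svd Ψ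
  have htr' : traceNorm Ψ = ∑ k, g k := htr
  constructor
  · refine ⟨U, hU, V, hV, ?_⟩
    rw [htr', hUAV]
    refine Finset.sum_congr rfl fun i _ => ?_
    rw [Fintype.sum_eq_single i
      (fun j hj => by rw [Matrix.diagonal_apply_ne _ (Ne.symm hj), norm_zero])]
    rw [Matrix.diagonal_apply_eq, Complex.norm_of_nonneg (hg i)]
  · rintro x ⟨U₁, hU₁, V₁, hV₁, rfl⟩
    rw [htr']
    set D : Matrix (Fin d) (Fin d) ℂ := Matrix.diagonal (fun k => (g k : ℂ)) with hD
    have hΨ : Ψ = star U * D * star V := by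
      rw [← hUAV]
      rw [show star U * (U * Ψ * V) * star V = (star U * U) * Ψ * (V * star V) by
        simp only [mul_assoc]]
      rw [Matrix.mem_unitaryGroup_iff'.mp hU, Matrix.mem_unitaryGroup_iff.mp hV]
      simp
    set W₁ : Matrix (Fin d) (Fin d) ℂ := U₁ * star U with hW₁
    set W₂ : Matrix (Fin d) (Fin d) ℂ := star V * V₁ with hW₂
    have hW₁u : W₁ ∈ Matrix.unitaryGroup (Fin d) ℂ := mul_mem hU₁ (star_mem_unitaryGroup hU)
    have hW₂u : W₂ ∈ Matrix.unitaryGroup (Fin d) ℂ := mul_mem (star_mem_unitaryGroup hV) hV₁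
    have hX : U₁ * Ψ * V₁ = W₁ * D * W₂ := by
      rw [hΨ, hW₁, hW₂]
      simp only [mul_assoc]
    set X : Matrix (Fin d) (Fin d) ℂ := U₁ * Ψ * V₁ with hXdef
    set M : Matrix (Fin d) (Fin d) ℂ := star W₂ * star W₁ with hM
    have hMu : M ∈ Matrix.unitaryGroup (Fin d) ℂ :=
      mul_mem (star_mem_unitaryGroup hW₂u) (star_mem_unitaryGroup hW₁u)
    have htrMX : (M * X).trace = D.trace := by
      have h5 : M * X = star W₂ * D * W₂ := by
        rw [hX, hM]
        rw [show star W₂ * star W₁ * (W₁ * D * W₂)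
            = star W₂ * ((star W₁ * W₁) * (D * W₂)) by simp only [mul_assoc]]
        rw [Matrix.mem_unitaryGroup_iff'.mp hW₁u, one_mul, mul_assoc]
      rw [h5, Matrix.trace_mul_cycle, Matrix.mem_unitaryGroup_iff.mp hW₂u, one_mul]
    have hDre : (D.trace).re = ∑ k, g k := by
      rw [hD, Matrix.trace_diagonal, Complex.re_sum]
      simp
    have h1 : ∑ k, g k ≤ ‖(M * X).trace‖ := by
      rw [← hDre, ← htrMX]
      exact Complex.re_le_norm _
    have h2 : ‖(M * X).trace‖ ≤ ∑ i, ∑ j, ‖X j i‖ := by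
      rw [Matrix.trace]
      refine le_trans (norm_sum_le _ _) (Finset.sum_le_sum fun i _ => ?_)
      rw [Matrix.diag, Matrix.mul_apply]
      refine le_trans (norm_sum_le _ _) (Finset.sum_le_sum fun j _ => ?_)
      rw [norm_mul]
      calc ‖M i j‖ * ‖X j i‖
          ≤ 1 * ‖X j i‖ :=
            mul_le_mul_of_nonneg_right (unitary_entry_abs_le hMu i j) (norm_nonneg _)
        _ = ‖X j i‖ := one_mul _
    calc ∑ k, g k ≤ ∑ i, ∑ j, ‖X j i‖ := le_trans h1 h2
      _ = ∑ j, ∑ i, ‖X j i‖ := Finset.sum_comm
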